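/- (Two-cohort quadratic equation for the autoregressive parameter.) Suppose two cohorts a ∈ {1, 2}, each on its own probability space, satisfy the fixed-effect/AR(1) setting with the same sequences μ_t and ρ_t and the same parameter k. For a cohort a write Cᵃ(s, r) := cov(wᵃ_s, wᵃ_r). Then for all integers t, t', t'' with t' ≤ t − k − 1 and t'' ≤ t − k − 1: ( C¹(t', t) − ρ_t·C¹(t', t−1) ) · ( C²(t'', t) − ρ_t·C²(t'', t−1) ) = ( C²(t', t) − ρ_t·C²(t', t−1) ) · ( C¹(t'', t) − ρ_t·C¹(t'', t−1) ). Equivalently, ρ_t satisfies A·ρ_t² + B·ρ_t + C = 0, where A := C¹(t', t−1)·C²(t'', t−1) − C¹(t'', t−1)·C²(t', t−1), B := C¹(t'', t)·C²(t', t−1) + C¹(t'', t−1)·C²(t', t) − C¹(t', t)·C²(t'', t−1) − C¹(t', t−1)·C²(t'', t), and C := C¹(t', t)·C²(t'', t) − C¹(t'', t)·C²(t', t). -/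

import Mathlib

open MeasureTheory ProbabilityTheory

/-- Covariance of two real-valued random variables under measure `P`. -/
noncomputable def cov {Ω : Type*} [MeasurableSpace Ω] (P : Measure Ω) (X Y : Ω → ℝ) : ℝ :=
  ∫ ω, (X ω - ∫ a, X a ∂P) * (Y ω - ∫ a, Y a ∂P) ∂P

/-- Variance of a real-valued random variable under measure `P`. -/
noncomputable def Var {Ω : Type*} [MeasurableSpace Ω] (P : Measure Ω) (X : Ω → ℝ) : ℝ :=
  cov P X X

set_option linter.unusedSectionVars false

section lems

variable {Ω : Type*} [MeasurableSpace Ω] {P : Measure Ω} [IsProbabilityMeasure P]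
  {X Y Z : Ω → ℝ}

lemma integrable_mul_L2 (hX : MemLp X 2 P) (hY : MemLp Y 2 P) :
    Integrable (fun ω => X ω * Y ω) P := by
  rw [← memLp_one_iff_integrable]
  have h := hY.smul (p := 2) (q := 2) (r := 1) hX (hpqr := ENNReal.holderConjugate_iff.mpr ENNReal.inv_two_add_inv_two)
  exact h

lemma memL2_sub_const (hX : MemLp X 2 P) (c : ℝ) :
    MemLp (fun ω => X ω - c) 2 P := hX.sub (memLp_const c)

lemma cov_comm : cov P X Y = cov P Y X := by
  simp only [cov, mul_comm]

lemma cov_add_left (hX : MemLp X 2 P) (hY : MemLp Y 2 P) (hZ : MemLp Z 2 P) :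
    cov P (fun ω => X ω + Y ω) Z = cov P X Z + cov P Y Z := by
  unfold cov
  rw [integral_add (hX.integrable one_le_two) (hY.integrable one_le_two),
    ← integral_add (integrable_mul_L2 (memL2_sub_const hX _) (memL2_sub_const hZ _))
      (integrable_mul_L2 (memL2_sub_const hY _) (memL2_sub_const hZ _))]
  congr 1; funext ω; ring

lemma cov_smul_left (c : ℝ) : cov P (fun ω => c * X ω) Y = c * cov P X Y := by
  have h : (fun ω => (c * X ω - ∫ a, c * X a ∂P) * (Y ω - ∫ a, Y a ∂P))
      = fun ω => c * ((X ω - ∫ a, X a ∂P) * (Y ω - ∫ a, Y a ∂P)) := by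
    funext ω; rw [integral_const_mul]; ring
  simp only [cov]
  rw [h, integral_const_mul]

lemma cov_add_right (hX : MemLp X 2 P) (hY : MemLp Y 2 P) (hZ : MemLp Z 2 P) :
    cov P X (fun ω => Y ω + Z ω) = cov P X Y + cov P X Z := by
  rw [cov_comm, cov_add_left hY hZ hX, cov_comm (X := Y), cov_comm (X := Z)]

lemma cov_smul_right (c : ℝ) : cov P X (fun ω => c * Y ω) = c * cov P X Y := by
  rw [cov_comm, cov_smul_left, cov_comm (X := Y)]

end lems

/-- A cohort satisfying the fixed-effect/AR(1) setting with returns `μ`, autoregressive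
parameters `ρ`, and lag parameter `k` for the non-skill shocks. -/
structure FEARCohort {Ω : Type*} [MeasurableSpace Ω] (P : Measure Ω)
    (μ ρ : ℤ → ℝ) (k : ℕ) where
  ψ : Ω → ℝ
  φ : ℤ → Ω → ℝ
  ν : ℤ → Ω → ℝ
  ε : ℤ → Ω → ℝ
  w : ℤ → Ω → ℝ
  hψ : MemLp ψ 2 P
  hφ : ∀ t, MemLp (φ t) 2 P
  hν : ∀ t, MemLp (ν t) 2 P
  hε : ∀ t, MemLp (ε t) 2 P
  hw : ∀ t ω, w t ω = μ t * ψ ω + φ t ω + ε t ω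
  hrec : ∀ t ω, φ t ω = ρ t * φ (t - 1) ω + ν t ω
  hψφ : ∀ t : ℤ, cov P ψ (φ t) = 0
  hψε : ∀ t : ℤ, cov P ψ (ε t) = 0
  hφε : ∀ t t' : ℤ, cov P (φ t) (ε t') = 0
  hφν : ∀ t t' : ℤ, t' < t → cov P (φ t') (ν t) = 0
  hεε : ∀ t t' : ℤ, (k : ℤ) ≤ |t - t'| → cov P (ε t) (ε t') = 0


lemma covw {Ω : Type*} [MeasurableSpace Ω] {P : Measure Ω} [IsProbabilityMeasure P]
    {μ ρ : ℤ → ℝ} {k : ℕ} (c : FEARCohort P μ ρ k) (s r : ℤ) :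
    cov P (c.w s) (c.w r)
      = μ s * μ r * Var P c.ψ + cov P (c.φ s) (c.φ r) + cov P (c.ε s) (c.ε r) := by
  have hs : c.w s = fun ω => μ s * c.ψ ω + (c.φ s ω + c.ε s ω) :=
    funext fun ω => by rw [c.hw]; ring
  have hr : c.w r = fun ω => μ r * c.ψ ω + (c.φ r ω + c.ε r ω) :=
    funext fun ω => by rw [c.hw]; ring
  have mψs : MemLp (fun ω => μ s * c.ψ ω) 2 P := c.hψ.const_mul _
  have mψr : MemLp (fun ω => μ r * c.ψ ω) 2 P := c.hψ.const_mul _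
  have mφεs : MemLp (fun ω => c.φ s ω + c.ε s ω) 2 P := by exact (c.hφ s).add (c.hε s)
  have mφεr : MemLp (fun ω => c.φ r ω + c.ε r ω) 2 P := by exact (c.hφ r).add (c.hε r)
  have mR : MemLp (fun ω => μ r * c.ψ ω + (c.φ r ω + c.ε r ω)) 2 P := by
    exact mψr.add mφεr
  have e1 : cov P c.ψ (c.φ r) = 0 := c.hψφ r
  have e2 : cov P c.ψ (c.ε r) = 0 := c.hψε r
  have e3 : cov P (c.φ s) c.ψ = 0 := by rw [cov_comm]; exact c.hψφ s
  have e4 : cov P (c.φ s) (c.ε r) = 0 := c.hφε s r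
  have e5 : cov P (c.ε s) c.ψ = 0 := by rw [cov_comm]; exact c.hψε s
  have e6 : cov P (c.ε s) (c.φ r) = 0 := by rw [cov_comm]; exact c.hφε r s
  rw [hs, hr,
    cov_add_left mψs mφεs mR,
    cov_add_left (c.hφ s) (c.hε s) mR,
    cov_add_right mψs mψr mφεr,
    cov_add_right (c.hφ s) mψr mφεr,
    cov_add_right (c.hε s) mψr mφεr,
    cov_add_right mψs (c.hφ r) (c.hε r),
    cov_add_right (c.hφ s) (c.hφ r) (c.hε r),
    cov_add_right (c.hε s) (c.hφ r) (c.hε r),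
    cov_smul_left, cov_smul_left, cov_smul_left,
    cov_smul_right, cov_smul_right, cov_smul_right,
    e1, e2, e3, e4, e5, e6]
  simp only [Var]
  ring

lemma key_diff {Ω : Type*} [MeasurableSpace Ω] {P : Measure Ω} [IsProbabilityMeasure P]
    {μ ρ : ℤ → ℝ} {k : ℕ} (c : FEARCohort P μ ρ k) (hk : 1 ≤ k) (t T : ℤ)
    (hT : T ≤ t - k - 1) :
    cov P (c.w T) (c.w t) - ρ t * cov P (c.w T) (c.w (t - 1))
      = μ T * (μ t - ρ t * μ (t - 1)) * Var P c.ψ := by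
  have hk' : (1 : ℤ) ≤ (k : ℤ) := by exact_mod_cast hk
  have hφrec : c.φ t = fun ω => ρ t * c.φ (t - 1) ω + c.ν t ω := funext (c.hrec t)
  have hsplit : cov P (c.φ T) (c.φ t)
      = ρ t * cov P (c.φ T) (c.φ (t - 1)) + cov P (c.φ T) (c.ν t) := by
    rw [hφrec, cov_add_right (c.hφ T) ((c.hφ (t - 1)).const_mul _) (c.hν t),
      cov_smul_right]
  have hν0 : cov P (c.φ T) (c.ν t) = 0 := c.hφν t T (by omega)
  have hε1 : cov P (c.ε T) (c.ε t) = 0 := by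
    refine c.hεε T t ?_
    rw [abs_sub_comm, abs_of_nonneg (by omega)]; omega
  have hε2 : cov P (c.ε T) (c.ε (t - 1)) = 0 := by
    refine c.hεε T (t - 1) ?_
    rw [abs_sub_comm, abs_of_nonneg (by omega)]; omega
  rw [covw c T t, covw c T (t - 1), hsplit, hν0, hε1, hε2]
  ring


/-- Two-cohort quadratic equation for the autoregressive parameter `ρ t`. -/
theorem two_cohort_quadratic_for_rho
    {Ω₁ Ω₂ : Type*} [MeasurableSpace Ω₁] [MeasurableSpace Ω₂]
    (P₁ : Measure Ω₁) (P₂ : Measure Ω₂)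
    [IsProbabilityMeasure P₁] [IsProbabilityMeasure P₂]
    (μ ρ : ℤ → ℝ) (k : ℕ) (hk : 1 ≤ k)
    (c₁ : FEARCohort P₁ μ ρ k) (c₂ : FEARCohort P₂ μ ρ k)
    (C₁ C₂ : ℤ → ℤ → ℝ)
    (hC₁ : ∀ s r : ℤ, C₁ s r = cov P₁ (c₁.w s) (c₁.w r))
    (hC₂ : ∀ s r : ℤ, C₂ s r = cov P₂ (c₂.w s) (c₂.w r))
    (t t' t'' : ℤ) (ht' : t' ≤ t - k - 1) (ht'' : t'' ≤ t - k - 1)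
    (A B C : ℝ)
    (hA : A = C₁ t' (t - 1) * C₂ t'' (t - 1) - C₁ t'' (t - 1) * C₂ t' (t - 1))
    (hB : B = C₁ t'' t * C₂ t' (t - 1) + C₁ t'' (t - 1) * C₂ t' t
            - C₁ t' t * C₂ t'' (t - 1) - C₁ t' (t - 1) * C₂ t'' t)
    (hC : C = C₁ t' t * C₂ t'' t - C₁ t'' t * C₂ t' t) :
    (C₁ t' t - ρ t * C₁ t' (t - 1)) * (C₂ t'' t - ρ t * C₂ t'' (t - 1)) =
        (C₂ t' t - ρ t * C₂ t' (t - 1)) * (C₁ t'' t - ρ t * C₁ t'' (t - 1)) ∧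
      A * ρ t ^ 2 + B * ρ t + C = 0 := by
  have k1 := key_diff c₁ hk t t' ht'
  have k2 := key_diff c₁ hk t t'' ht''
  have k3 := key_diff c₂ hk t t' ht'
  have k4 := key_diff c₂ hk t t'' ht''
  have h1 : (C₁ t' t - ρ t * C₁ t' (t - 1)) * (C₂ t'' t - ρ t * C₂ t'' (t - 1)) =
      (C₂ t' t - ρ t * C₂ t' (t - 1)) * (C₁ t'' t - ρ t * C₁ t'' (t - 1)) := by
    simp only [hC₁, hC₂]
    rw [k1, k2, k3, k4]
    ring
  refine ⟨h1, ?_⟩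
  subst hA hB hC
  linear_combination h1
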